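/- Assume Ŷ and Ẑ are linearly independent. Then A admits the spectral decomposition A = s₁ q₁ q₁ᵀ + s₂ q₂ q₂ᵀ + ⟨y, z⟩ (I_K − q₁ q₁ᵀ − q₂ q₂ᵀ), where q₁ = (‖Ŷ‖Ẑ + ‖Ẑ‖Ŷ)/‖‖Ŷ‖Ẑ + ‖Ẑ‖Ŷ‖, q₂ = (‖Ŷ‖Ẑ − ‖Ẑ‖Ŷ)/‖‖Ŷ‖Ẑ − ‖Ẑ‖Ŷ‖, s₁ = ⟨y, z⟩ − (‖Ŷ‖‖Ẑ‖ + ⟨Ŷ, Ẑ⟩)/2, and s₂ = ⟨y, z⟩ + (‖Ŷ‖‖Ẑ‖ − ⟨Ŷ, Ẑ⟩)/2. -/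
import Mathlib


open Matrix

/-- The Euclidean norm of a vector in `Fin n → ℝ`. -/
noncomputable def euclNorm {n : ℕ} (v : Fin n → ℝ) : ℝ := Real.sqrt (v ⬝ᵥ v)

lemma euclNorm_sq {n : ℕ} (v : Fin n → ℝ) : euclNorm v ^ 2 = v ⬝ᵥ v := by
  unfold euclNorm
  rw [Real.sq_sqrt]
  exact Finset.sum_nonneg fun i _ => mul_self_nonneg _

lemma euclNorm_ne_zero {n : ℕ} {v : Fin n → ℝ} (hv : v ≠ 0) : euclNorm v ≠ 0 := by
  intro h
  apply hv
  have := euclNorm_sq v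
  rw [h] at this
  simpa [dotProduct_self_eq_zero, eq_comm] using this

/-- Spectral decomposition of `A = ⟨y,z⟩ I − (ŶẐᵀ + ẐŶᵀ)/2` when `Ŷ = Xᵀy` and
`Ẑ = Xᵀz` are linearly independent:
`A = s₁ q₁q₁ᵀ + s₂ q₂q₂ᵀ + ⟨y,z⟩ (I − q₁q₁ᵀ − q₂q₂ᵀ)`. -/
theorem spectral_decomposition_of_A
    (N K : ℕ) (hN : 0 < N) (hK : 0 < K)
    (y z : Fin N → ℝ) (X : Matrix (Fin N) (Fin K) ℝ)
    (hX : Xᵀ * X = 1)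
    (Yh Zh : Fin K → ℝ) (hYh : Yh = Xᵀ.mulVec y) (hZh : Zh = Xᵀ.mulVec z)
    (A : Matrix (Fin K) (Fin K) ℝ)
    (hA : A = (y ⬝ᵥ z) • (1 : Matrix (Fin K) (Fin K) ℝ) -
        (2⁻¹ : ℝ) • (vecMulVec Yh Zh + vecMulVec Zh Yh))
    (hli : LinearIndependent ℝ ![Yh, Zh])
    (q1 q2 : Fin K → ℝ)
    (hq1 : q1 = (euclNorm (euclNorm Yh • Zh + euclNorm Zh • Yh))⁻¹ •
        (euclNorm Yh • Zh + euclNorm Zh • Yh))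
    (hq2 : q2 = (euclNorm (euclNorm Yh • Zh - euclNorm Zh • Yh))⁻¹ •
        (euclNorm Yh • Zh - euclNorm Zh • Yh))
    (s1 s2 : ℝ)
    (hs1 : s1 = y ⬝ᵥ z - (euclNorm Yh * euclNorm Zh + Yh ⬝ᵥ Zh) / 2)
    (hs2 : s2 = y ⬝ᵥ z + (euclNorm Yh * euclNorm Zh - Yh ⬝ᵥ Zh) / 2) :
    A = s1 • vecMulVec q1 q1 + s2 • vecMulVec q2 q2 +
        (y ⬝ᵥ z) • ((1 : Matrix (Fin K) (Fin K) ℝ) - vecMulVec q1 q1 - vecMulVec q2 q2) := by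
  -- notation
  set a := euclNorm Yh with ha_def
  set b := euclNorm Zh with hb_def
  set u : Fin K → ℝ := a • Zh + b • Yh with hu_def
  set v : Fin K → ℝ := a • Zh - b • Yh with hv_def
  set d := Yh ⬝ᵥ Zh with hd_def
  set c := y ⬝ᵥ z with hc_def
  -- linear independence facts
  rw [linearIndependent_fin2] at hli
  have hZ0 : Zh ≠ 0 := by simpa using hli.1
  have hY0 : Yh ≠ 0 := by
    intro h
    exact hli.2 0 (by simp [h])
  have ha : a ≠ 0 := euclNorm_ne_zero hY0
  have hb : b ≠ 0 := euclNorm_ne_zero hZ0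
  have hu0 : u ≠ 0 := by
    intro h
    apply hli.2 (-(a / b))
    funext i
    have hi := congrFun h i
    simp only [hu_def, Pi.add_apply, Pi.smul_apply, smul_eq_mul, Pi.zero_apply] at hi
    simp only [Matrix.cons_val_one, Matrix.head_cons, Matrix.cons_val_zero, Pi.smul_apply,
      smul_eq_mul]
    field_simp
    linarith [hi]
  have hv0 : v ≠ 0 := by
    intro h
    apply hli.2 (a / b)
    funext i
    have hi := congrFun h i
    simp only [hv_def, Pi.sub_apply, Pi.smul_apply, smul_eq_mul, Pi.zero_apply] at hi
    simp only [Matrix.cons_val_one, Matrix.head_cons, Matrix.cons_val_zero, Pi.smul_apply,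
      smul_eq_mul]
    field_simp
    linarith [hi]
  have hnu : euclNorm u ≠ 0 := euclNorm_ne_zero hu0
  have hnv : euclNorm v ≠ 0 := euclNorm_ne_zero hv0
  -- squared norms
  have ha2 : a ^ 2 = Yh ⬝ᵥ Yh := euclNorm_sq Yh
  have hb2 : b ^ 2 = Zh ⬝ᵥ Zh := euclNorm_sq Zh
  have hnu2 : euclNorm u ^ 2 = 2 * a * b * (a * b + d) := by
    rw [euclNorm_sq, hu_def]
    simp only [add_dotProduct, dotProduct_add, smul_dotProduct, dotProduct_smul,
      smul_eq_mul]
    rw [dotProduct_comm Zh Yh, ← ha2, ← hb2, ← hd_def]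
    ring
  have hnv2 : euclNorm v ^ 2 = 2 * a * b * (a * b - d) := by
    rw [euclNorm_sq, hv_def]
    simp only [sub_dotProduct, dotProduct_sub, smul_dotProduct, dotProduct_smul,
      smul_eq_mul]
    rw [dotProduct_comm Zh Yh, ← ha2, ← hb2, ← hd_def]
    ring
  have h1 : a * b + d ≠ 0 := by
    intro h
    apply hnu
    have : euclNorm u ^ 2 = 0 := by rw [hnu2, h, mul_zero]
    exact pow_eq_zero_iff (n := 2) (by norm_num) |>.mp this
  have h2 : a * b - d ≠ 0 := by
    intro h
    apply hnv
    have : euclNorm v ^ 2 = 0 := by rw [hnv2, h, mul_zero]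
    exact pow_eq_zero_iff (n := 2) (by norm_num) |>.mp this
  -- rank-one pieces
  have hq1q1 : vecMulVec q1 q1 = (2 * a * b * (a * b + d))⁻¹ • vecMulVec u u := by
    rw [hq1]
    ext i j
    simp only [vecMulVec_apply, Pi.smul_apply, smul_eq_mul, Matrix.smul_apply]
    rw [show ((euclNorm u)⁻¹ * u i) * ((euclNorm u)⁻¹ * u j)
        = (euclNorm u ^ 2)⁻¹ * (u i * u j) by rw [sq, mul_inv]; ring, hnu2]
  have hq2q2 : vecMulVec q2 q2 = (2 * a * b * (a * b - d))⁻¹ • vecMulVec v v := by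
    rw [hq2]
    ext i j
    simp only [vecMulVec_apply, Pi.smul_apply, smul_eq_mul, Matrix.smul_apply]
    rw [show ((euclNorm v)⁻¹ * v i) * ((euclNorm v)⁻¹ * v j)
        = (euclNorm v ^ 2)⁻¹ * (v i * v j) by rw [sq, mul_inv]; ring, hnv2]
  rw [hA, hq1q1, hq2q2, hs1, hs2]
  ext i j
  simp only [Matrix.add_apply, Matrix.sub_apply, Matrix.smul_apply, vecMulVec_apply,
    smul_eq_mul, Pi.add_apply, Pi.sub_apply, Pi.smul_apply, hu_def, hv_def, ← hc_def, ← hd_def]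
  field_simp
  ring
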